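/- Taking the van Hove rescaling (μ,λ) → (μ/λ, 1) in D(t): with δ_±(λ) = (2 + μ/λ)/2 ± (1/2)√((2+μ/λ)² − 4μ/λ) (the case N = 2, m = 1 with λ replaced by 1 and μ by μ/λ), the function D_λ(t) = (−δ₋e^{−δ₊t} + δ₊e^{−δ₋t})/(δ₊−δ₋) converges pointwise to e^{−t} as λ → 0⁺, for each fixed t ≥ 0 and μ > 0. -/

import Mathlib

open Real Filter

/-- van Hove rescaling: with a = 2 + μ/λ and
δ_±(λ) = (a ± √(a² − 4μ/λ))/2, the function
D_λ(t) = (−δ₋e^{−δ₊t} + δ₊e^{−δ₋t})/(δ₊−δ₋) converges to e^{−t} as λ → 0⁺,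
for each fixed t ≥ 0 and μ > 0. -/
theorem van_hove_entropy_limit (mu : ℝ) (hmu : 0 < mu) (t : ℝ) (ht : 0 ≤ t) :
    Tendsto (fun lam : ℝ =>
        let a : ℝ := 2 + mu / lam
        let dp : ℝ := (a + Real.sqrt (a ^ 2 - 4 * mu / lam)) / 2
        let dm : ℝ := (a - Real.sqrt (a ^ 2 - 4 * mu / lam)) / 2
        (-dm * Real.exp (-dp * t) + dp * Real.exp (-dm * t)) / (dp - dm))
      (nhdsWithin 0 (Set.Ioi 0)) (nhds (Real.exp (-t))) := by
  have hμ : Tendsto (fun lam : ℝ => mu / lam) (nhdsWithin 0 (Set.Ioi 0)) atTop := by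
    have h := tendsto_inv_nhdsGT_zero.const_mul_atTop hmu
    simpa [div_eq_mul_inv] using h
  set s : ℝ → ℝ := fun x => Real.sqrt (x ^ 2 + 4) with hsdef
  set dm : ℝ → ℝ := fun x => (2 + x - s x) / 2 with hdmdef
  have hs_pos : ∀ x, 0 < s x := fun x => Real.sqrt_pos.2 (by positivity)
  have hs_sq : ∀ x, s x ^ 2 = x ^ 2 + 4 := fun x => Real.sq_sqrt (by positivity)
  have hs_ge : ∀ x, 0 ≤ x → x ≤ s x := by
    intro x hx
    nlinarith [hs_sq x, hs_pos x]
  have L1 : Tendsto s atTop atTop := by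
    refine tendsto_atTop_mono' atTop ?_ tendsto_id
    filter_upwards [eventually_ge_atTop (0:ℝ)] with x hx using hs_ge x hx
  have L2 : Tendsto (fun x => x + s x) atTop atTop := by
    refine tendsto_atTop_mono (fun x => ?_) tendsto_id
    have := (hs_pos x).le; simp only [id]; linarith
  have L3 : Tendsto dm atTop (nhds 1) := by
    have h0 : Tendsto (fun x => 1 - 2 / (x + s x)) atTop (nhds (1 - 0)) :=
      tendsto_const_nhds.sub (tendsto_const_nhds.div_atTop L2)
    rw [sub_zero] at h0
    refine h0.congr' ?_
    filter_upwards [eventually_gt_atTop (0:ℝ)] with x hx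
    have hxs : 0 < x + s x := by have := hs_pos x; linarith
    have hsq := hs_sq x
    simp only [hdmdef]
    field_simp
    nlinarith [hsq]
  have L4 : Tendsto (fun x => dm x / s x) atTop (nhds 0) := L3.div_atTop L1
  have L5 : Tendsto (fun x => Real.exp (-dm x * t)) atTop (nhds (Real.exp (-t))) := by
    have h := (Real.continuous_exp.tendsto _).comp (L3.neg.mul_const t)
    simpa [Function.comp_def] using h
  have L6 : Tendsto (fun x => dm x / s x * Real.exp (-((2 + x + s x) / 2) * t))
      atTop (nhds 0) := by
    have hub : ∀ᶠ x in atTop,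
        dm x / s x * Real.exp (-((2 + x + s x) / 2) * t) ≤ dm x / s x := by
      filter_upwards [eventually_gt_atTop (0:ℝ)] with x hx
      have hdm_nn : 0 ≤ dm x / s x := by
        have h1 : 0 ≤ dm x := by
          have := hs_sq x; have := hs_pos x
          simp only [hdmdef]
          nlinarith [hs_ge x hx.le]
        exact div_nonneg h1 (hs_pos x).le
      have hexp : Real.exp (-((2 + x + s x) / 2) * t) ≤ 1 := by
        rw [Real.exp_le_one_iff]
        have := hs_pos x
        nlinarith
      exact mul_le_of_le_one_right hdm_nn hexp
    have hlb : ∀ᶠ x in atTop,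
        0 ≤ dm x / s x * Real.exp (-((2 + x + s x) / 2) * t) := by
      filter_upwards [eventually_gt_atTop (0:ℝ)] with x hx
      have h1 : 0 ≤ dm x := by
        have := hs_sq x; have := hs_pos x
        simp only [hdmdef]
        nlinarith [hs_ge x hx.le]
      positivity
    exact squeeze_zero' hlb hub L4
  have L7 : Tendsto (fun x =>
      -(dm x / s x * Real.exp (-((2 + x + s x) / 2) * t))
        + (dm x / s x + 1) * Real.exp (-dm x * t))
      atTop (nhds (Real.exp (-t))) := by
    have h := L6.neg.add ((L4.add_const 1).mul L5)
    simpa using h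
  have key : Tendsto (fun x : ℝ =>
      (-((2 + x - Real.sqrt (x ^ 2 + 4)) / 2)
          * Real.exp (-((2 + x + Real.sqrt (x ^ 2 + 4)) / 2) * t)
        + ((2 + x + Real.sqrt (x ^ 2 + 4)) / 2)
          * Real.exp (-((2 + x - Real.sqrt (x ^ 2 + 4)) / 2) * t))
      / ((2 + x + Real.sqrt (x ^ 2 + 4)) / 2
          - (2 + x - Real.sqrt (x ^ 2 + 4)) / 2))
      atTop (nhds (Real.exp (-t))) := by
    refine L7.congr fun x => ?_
    have hS : s x ≠ 0 := (hs_pos x).ne'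
    show -(dm x / s x * Real.exp (-((2 + x + s x) / 2) * t))
        + (dm x / s x + 1) * Real.exp (-dm x * t)
      = (-((2 + x - s x) / 2) * Real.exp (-((2 + x + s x) / 2) * t)
        + ((2 + x + s x) / 2) * Real.exp (-((2 + x - s x) / 2) * t))
      / ((2 + x + s x) / 2 - (2 + x - s x) / 2)
    have hdmx : dm x = (2 + x - s x) / 2 := rfl
    rw [hdmx]
    have hden : (2 + x + s x) / 2 - (2 + x - s x) / 2 = s x := by ring
    rw [hden]
    field_simp
    ring
  have comp := key.comp hμ
  refine comp.congr fun lam => ?_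
  simp only [Function.comp]
  have harg : (2 + mu / lam) ^ 2 - 4 * mu / lam = (mu / lam) ^ 2 + 4 := by ring
  rw [harg]
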